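/- arXiv:0704.3847 — 2 statements merged into one kernel-verified Lean document; each statement's English description precedes it below -/
import Mathlib

section
/- Let φ : [-h,h] → ℝ satisfy φ'' + (λ - q(x))φ = 0 on [-h,h] with q ∈ L^∞([-h,h]), φ(0) = 1, φ'(0) = 0, and suppose d² ≥ 0. Then | φ'(h)² + (λ - d²)φ(h)² - (λ - d²) | ≤ 2 (‖q‖_∞ + d²) ∫₀ʰ |φ(x) φ'(x)| dx. -/
open MeasureTheory intervalIntegral

/-- Energy identity estimate for the symmetric mode `φ_s`:
`φ(0) = 1`, `φ'(0) = 0`. -/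
theorem stmt_1 (q φ : ℝ → ℝ) (h lam d2 M : ℝ) (hh : 0 < h)
    (hd2 : 0 ≤ d2) (hM : ∀ x ∈ Set.Icc (-h) h, |q x| ≤ M)
    (hφ : ContDiff ℝ 2 φ)
    (hode : ∀ x ∈ Set.Icc (-h) h,
      deriv (deriv φ) x + (lam - q x) * φ x = 0)
    (h0 : φ 0 = 1) (h0' : deriv φ 0 = 0) :
    |deriv φ h ^ 2 + (lam - d2) * φ h ^ 2 - (lam - d2)|
      ≤ 2 * (M + d2) * ∫ x in (0:ℝ)..h, |φ x * deriv φ x| := by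
  have hφd : Differentiable ℝ φ := hφ.differentiable (by norm_num)
  have hφ1 : ContDiff ℝ 1 (deriv φ) := by
    have h2 : ContDiff ℝ ((1:ℕ)+1) φ := by exact_mod_cast hφ
    exact_mod_cast (contDiff_succ_iff_deriv.mp h2).2.2
  have hφd' : Differentiable ℝ (deriv φ) := hφ1.differentiable one_ne_zero
  have hcont2 : Continuous (deriv (deriv φ)) := hφ1.continuous_deriv le_rfl
  set g : ℝ → ℝ := fun x =>
    2 * deriv φ x * deriv (deriv φ) x + (lam - d2) * (2 * φ x * deriv φ x) with hg
  have hF : ∀ x ∈ Set.uIcc (0:ℝ) h, HasDerivAt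
      (fun y => deriv φ y ^ 2 + (lam - d2) * φ y ^ 2) (g x) x := by
    intro x _
    have h1 : HasDerivAt (fun y => deriv φ y ^ 2)
        (2 * deriv φ x * deriv (deriv φ) x) x := by
      have := ((hφd' x).hasDerivAt).fun_pow 2
      simpa [mul_comm, mul_assoc, mul_left_comm] using this
    have h2 : HasDerivAt (fun y => (lam - d2) * φ y ^ 2)
        ((lam - d2) * (2 * φ x * deriv φ x)) x := by
      have := (((hφd x).hasDerivAt).fun_pow 2).const_mul (lam - d2)
      simpa [mul_comm, mul_assoc, mul_left_comm] using this
    exact h1.add h2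
  have hgc : Continuous g := by
    apply Continuous.add
    · exact (continuous_const.mul (hφd'.continuous)).mul hcont2
    · exact continuous_const.mul
        ((continuous_const.mul hφd.continuous).mul hφd'.continuous)
  have hint : (∫ x in (0:ℝ)..h, g x) =
      (deriv φ h ^ 2 + (lam - d2) * φ h ^ 2) -
      (deriv φ 0 ^ 2 + (lam - d2) * φ 0 ^ 2) :=
    intervalIntegral.integral_eq_sub_of_hasDerivAt hF
      (hgc.intervalIntegrable 0 h)
  have hM0 : 0 ≤ M := le_trans (abs_nonneg _)
    (hM 0 ⟨by linarith, hh.le⟩)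
  have hbound : ∀ x ∈ Set.Icc (0:ℝ) h, |g x| ≤ 2 * (M + d2) * |φ x * deriv φ x| := by
    intro x hx
    have hxI : x ∈ Set.Icc (-h) h := ⟨by linarith [hx.1], hx.2⟩
    have hode' : deriv (deriv φ) x = (q x - lam) * φ x := by
      have := hode x hxI; linarith
    have : g x = 2 * (q x - d2) * (φ x * deriv φ x) := by
      rw [hg]; simp only []; rw [hode']; ring
    rw [this, abs_mul]
    have h1 : |2 * (q x - d2)| ≤ 2 * (M + d2) := by
      rw [abs_mul, abs_two]
      have := hM x hxI
      have := abs_sub_abs_le_abs_sub (q x) d2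
      have hq : |q x - d2| ≤ M + d2 := by
        have := abs_sub (q x) d2
        calc |q x - d2| ≤ |q x| + |d2| := abs_sub _ _
          _ ≤ M + d2 := by rw [abs_of_nonneg hd2]; linarith [hM x hxI]
      nlinarith [abs_nonneg (q x - d2)]
    exact mul_le_mul_of_nonneg_right h1 (abs_nonneg _)
  have key : |∫ x in (0:ℝ)..h, g x| ≤ 2 * (M + d2) * ∫ x in (0:ℝ)..h, |φ x * deriv φ x| := by
    calc |∫ x in (0:ℝ)..h, g x| ≤ ∫ x in (0:ℝ)..h, |g x| :=
          intervalIntegral.abs_integral_le_integral_abs hh.le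
      _ ≤ ∫ x in (0:ℝ)..h, 2 * (M + d2) * |φ x * deriv φ x| := by
          apply intervalIntegral.integral_mono_on hh.le
          · exact (hgc.abs).intervalIntegrable 0 h
          · exact ((continuous_const.mul
              ((hφd.continuous.mul hφd'.continuous).abs)).intervalIntegrable 0 h)
          · exact hbound
      _ = 2 * (M + d2) * ∫ x in (0:ℝ)..h, |φ x * deriv φ x| := by
          rw [intervalIntegral.integral_const_mul]
  rw [hint] at key
  simpa [h0, h0'] using key
end

section
/- Let φ : [-h,h] → ℝ satisfy φ'' + (λ - q(x))φ = 0 with q ∈ L^∞, φ(0) = 0, φ'(0) = √λ (λ > 0), and let d² ≥ 0. Then | φ'(h)² + (λ - d²)φ(h)² - λ | ≤ 2(‖q‖_∞ + d²) ∫₀ʰ |φ(x)φ'(x)| dx. -/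
open MeasureTheory intervalIntegral

/-- Energy identity estimate for the antisymmetric mode `φ_a`:
`φ(0) = 0`, `φ'(0) = √λ`. -/
theorem stmt_2 (q φ : ℝ → ℝ) (h lam d2 M : ℝ) (hh : 0 < h) (hlam : 0 < lam)
    (hd2 : 0 ≤ d2) (hM : ∀ x ∈ Set.Icc (-h) h, |q x| ≤ M)
    (hφ : ContDiff ℝ 2 φ)
    (hode : ∀ x ∈ Set.Icc (-h) h,
      deriv (deriv φ) x + (lam - q x) * φ x = 0)
    (h0 : φ 0 = 0) (h0' : deriv φ 0 = Real.sqrt lam) :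
    |deriv φ h ^ 2 + (lam - d2) * φ h ^ 2 - lam|
      ≤ 2 * (M + d2) * ∫ x in (0:ℝ)..h, |φ x * deriv φ x| := by
  have hφ1 : ContDiff ℝ 1 (deriv φ) := by
    have := (contDiff_succ_iff_deriv (n := 1)).mp (by exact_mod_cast hφ)
    exact this.2.2
  have hdφ : Differentiable ℝ φ := hφ.differentiable (by norm_num)
  have hdψ : Differentiable ℝ (deriv φ) := hφ1.differentiable (by norm_num)
  have hcφ : Continuous φ := hdφ.continuous
  have hcψ : Continuous (deriv φ) := hdψ.continuous
  have hcψ' : Continuous (deriv (deriv φ)) := by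
    have := (contDiff_succ_iff_deriv (n := 1)).mp (by exact_mod_cast hφ)
    exact (this.2.2.continuous_deriv le_rfl)
  set f : ℝ → ℝ := fun x =>
    2 * deriv φ x * deriv (deriv φ) x + lam * (2 * φ x * deriv φ x)
      - d2 * (2 * φ x * deriv φ x) with hf
  have hcf : Continuous f := by
    continuity
  have key : ∀ x ∈ Set.uIcc (0:ℝ) h,
      HasDerivAt (fun y => deriv φ y ^ 2 + lam * φ y ^ 2 - d2 * φ y ^ 2) (f x) x := by
    intro x _
    have h1 : HasDerivAt φ (deriv φ x) x := (hdφ x).hasDerivAt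
    have h2 : HasDerivAt (deriv φ) (deriv (deriv φ) x) x := (hdψ x).hasDerivAt
    have := ((h2.pow 2).add (((h1.pow 2).const_mul lam))).sub ((h1.pow 2).const_mul d2)
    refine this.congr_deriv ?_
    simp only [hf]
    ring
  have hFTC :
      (∫ x in (0:ℝ)..h, f x)
        = (deriv φ h ^ 2 + lam * φ h ^ 2 - d2 * φ h ^ 2)
          - (deriv φ 0 ^ 2 + lam * φ 0 ^ 2 - d2 * φ 0 ^ 2) :=
    intervalIntegral.integral_eq_sub_of_hasDerivAt key
      (hcf.intervalIntegrable 0 h)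
  have hval : deriv φ h ^ 2 + (lam - d2) * φ h ^ 2 - lam = ∫ x in (0:ℝ)..h, f x := by
    rw [hFTC, h0, h0', Real.sq_sqrt hlam.le]; ring
  rw [hval]
  have hM0 : 0 ≤ M := le_trans (abs_nonneg _) (hM 0 (by constructor <;> linarith))
  have hbound : ∀ x ∈ Set.Icc (0:ℝ) h, |f x| ≤ 2 * (M + d2) * |φ x * deriv φ x| := by
    intro x hx
    have hx' : x ∈ Set.Icc (-h) h := ⟨by linarith [hx.1], hx.2⟩
    have ho := hode x hx'
    have hq : deriv (deriv φ) x = (q x - lam) * φ x := by linarith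
    have : f x = 2 * (q x - d2) * (φ x * deriv φ x) := by
      rw [hf]; simp only; rw [hq]; ring
    rw [this, abs_mul, abs_mul]
    have h1 : |q x - d2| ≤ M + d2 := by
      rw [sub_eq_add_neg]
      refine (abs_add_le _ _).trans ?_
      rw [abs_neg, abs_of_nonneg hd2]
      linarith [hM x hx']
    calc |(2:ℝ)| * |q x - d2| * |φ x * deriv φ x|
        ≤ |(2:ℝ)| * (M + d2) * |φ x * deriv φ x| := by
          apply mul_le_mul_of_nonneg_right _ (abs_nonneg _)
          exact mul_le_mul_of_nonneg_left h1 (abs_nonneg _)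
      _ = 2 * (M + d2) * |φ x * deriv φ x| := by norm_num
  calc |∫ x in (0:ℝ)..h, f x| ≤ ∫ x in (0:ℝ)..h, |f x| :=
        intervalIntegral.abs_integral_le_integral_abs hh.le
    _ ≤ ∫ x in (0:ℝ)..h, 2 * (M + d2) * |φ x * deriv φ x| := by
        apply intervalIntegral.integral_mono_on hh.le
        · exact (hcf.abs).intervalIntegrable 0 h
        · exact ((continuous_const.mul ((hcφ.mul hcψ).abs))).intervalIntegrable 0 h
        · exact hbound
    _ = 2 * (M + d2) * ∫ x in (0:ℝ)..h, |φ x * deriv φ x| := by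
        rw [intervalIntegral.integral_const_mul]
end
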